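/- Deterministic core of Lemma 1 (warm-up stage recursion). Assume η₀·L ≤ 1 and 0 < η₀·μ ≤ 1. Let G, δ, m₀ > 0 and let u₀, u₁, …, u_T ∈ E be generated by u_{t+1} = u_t − η₀·g̃_t, where for every t the vector g̃_t ∈ E satisfies ‖g̃_t − ∇F(u_t)‖² ≤ 4G²/(δ·m₀). Then F(u_T) ≤ (1 − η₀·μ)^T · F(u₀) + 2G²/(δ·m₀·μ). -/

import Mathlib

open InnerProductSpace intervalIntegral

lemma descent_lemma {E : Type*} [NormedAddCommGroup E] [InnerProductSpace ℝ E] [CompleteSpace E]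
    (F : E → ℝ) (L : ℝ) (hL : 0 ≤ L) (hdiff : Differentiable ℝ F)
    (hlip : ∀ w u : E, ‖gradient F w - gradient F u‖ ≤ L * ‖w - u‖) (x v : E) :
    F (x + v) ≤ F x + inner ℝ (gradient F x) v + L / 2 * ‖v‖ ^ 2 := by
  have hgradcont : Continuous (gradient F) := by
    refine (LipschitzWith.of_dist_le_mul (K := ⟨L, hL⟩) ?_).continuous
    intro a b
    rw [dist_eq_norm, dist_eq_norm]; exact hlip a b
  set c : ℝ := inner ℝ (gradient F x) v with hc
  have hγ : ∀ t : ℝ, HasDerivAt (fun t : ℝ => x + t • v) v t := fun t => by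
    simpa using ((hasDerivAt_id t).smul_const v).const_add x
  have hφ : ∀ t : ℝ, HasDerivAt (fun t : ℝ => F (x + t • v) - t * c)
      ((inner ℝ (gradient F (x + t • v)) v : ℝ) - c) t := by
    intro t
    have h1 := ((hdiff (x + t • v)).hasGradientAt.hasFDerivAt).comp_hasDerivAt t (hγ t)
    have h2 : HasDerivAt (fun t : ℝ => t * c) c t := by
      simpa using (hasDerivAt_id t).mul_const c
    exact h1.sub h2
  have hcontint : Continuous fun t : ℝ => (inner ℝ (gradient F (x + t • v)) v : ℝ) - c := by
    exact ((continuous_inner.comp ((hgradcont.comp (by continuity)).prodMk continuous_const)).sub continuous_const)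
  have hFTC := integral_eq_sub_of_hasDerivAt (f := fun t : ℝ => F (x + t • v) - t * c)
      (a := (0:ℝ)) (b := 1) (fun t _ => hφ t) (hcontint.intervalIntegrable 0 1)
  have hpt : ∀ t ∈ Set.Icc (0:ℝ) 1,
      (inner ℝ (gradient F (x + t • v)) v : ℝ) - c ≤ L * t * ‖v‖ ^ 2 := by
    intro t ht
    have h1 : (inner ℝ (gradient F (x + t • v)) v : ℝ) - c
        = inner ℝ (gradient F (x + t • v) - gradient F x) v := by
      rw [inner_sub_left]
    rw [h1]
    calc (inner ℝ (gradient F (x + t • v) - gradient F x) v : ℝ)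
        ≤ ‖gradient F (x + t • v) - gradient F x‖ * ‖v‖ := real_inner_le_norm _ _
      _ ≤ (L * ‖x + t • v - x‖) * ‖v‖ := by
          have := hlip (x + t • v) x
          exact mul_le_mul_of_nonneg_right this (norm_nonneg v)
      _ = L * t * ‖v‖ ^ 2 := by
          rw [add_sub_cancel_left, norm_smul, Real.norm_eq_abs, abs_of_nonneg ht.1]
          ring
  have hmono : (∫ t in (0:ℝ)..1, ((inner ℝ (gradient F (x + t • v)) v : ℝ) - c))
      ≤ ∫ t in (0:ℝ)..1, L * t * ‖v‖ ^ 2 := by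
    apply integral_mono_on zero_le_one (hcontint.intervalIntegrable 0 1)
    · exact (Continuous.intervalIntegrable (by fun_prop) 0 1)
    · exact hpt
  have hval : (∫ t in (0:ℝ)..1, L * t * ‖v‖ ^ 2) = L / 2 * ‖v‖ ^ 2 := by
    have : (∫ t in (0:ℝ)..1, L * t * ‖v‖ ^ 2)
        = (∫ t in (0:ℝ)..1, t) * (L * ‖v‖ ^ 2) := by
      rw [← intervalIntegral.integral_mul_const]
      congr 1; ext t; ring
    rw [this, integral_id]; ring
  rw [hFTC] at hmono
  simp only [one_smul, zero_smul, add_zero, one_mul, zero_mul, sub_zero] at hmono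
  linarith [hmono, hval]

lemma one_step {E : Type*} [NormedAddCommGroup E] [InnerProductSpace ℝ E] [CompleteSpace E]
    (F : E → ℝ) (L μ : ℝ) (hL : 0 < L) (hμ : 0 < μ)
    (hdiff : Differentiable ℝ F)
    (hlip : ∀ w u : E, ‖gradient F w - gradient F u‖ ≤ L * ‖w - u‖)
    (hPL : ∀ w : E, 2 * μ * F w ≤ ‖gradient F w‖ ^ 2)
    (η : ℝ) (hη : 0 < η) (hηL : η * L ≤ 1) (w g : E) :
    F (w - η • g) ≤ (1 - η * μ) * F w + η / 2 * ‖g - gradient F w‖ ^ 2 := by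
  have h := descent_lemma F L hL.le hdiff hlip w (-(η • g))
  rw [← sub_eq_add_neg] at h
  set a := gradient F w with ha
  have hinner : (inner ℝ a (-(η • g)) : ℝ) = -(η * inner ℝ a g) := by
    rw [inner_neg_right, real_inner_smul_right]
  have hnorm : ‖-(η • g)‖ ^ 2 = η ^ 2 * ‖g‖ ^ 2 := by
    rw [norm_neg, norm_smul, Real.norm_eq_abs, abs_of_nonneg hη.le]; ring
  have hge : ‖g‖ ^ 2 = ‖g - a‖ ^ 2 + 2 * inner ℝ a g - ‖a‖ ^ 2 := by
    have h1 := norm_sub_sq_real g a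
    have h2 : (inner ℝ g a : ℝ) = inner ℝ a g := real_inner_comm a g
    nlinarith [h1]
  rw [hinner, hnorm, hge] at h
  have hquad : L / 2 * (η ^ 2 * (‖g - a‖ ^ 2 + 2 * inner ℝ a g - ‖a‖ ^ 2))
      ≤ η / 2 * (‖g - a‖ ^ 2 + 2 * inner ℝ a g - ‖a‖ ^ 2) + 0 := by
    have hgg : 0 ≤ ‖g - a‖ ^ 2 + 2 * inner ℝ a g - ‖a‖ ^ 2 := by
      rw [← hge]; positivity
    nlinarith [mul_le_mul_of_nonneg_right hηL hgg, hη.le]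
  have hpl := hPL w
  nlinarith [h, hquad, hpl]


/-- Deterministic core of Lemma 1 (warm-up stage recursion). -/
theorem warmup_recursion
    {E : Type*} [NormedAddCommGroup E] [InnerProductSpace ℝ E] [CompleteSpace E]
    (F : E → ℝ) (L μ : ℝ) (hL : 0 < L) (hμ : 0 < μ)
    (hdiff : Differentiable ℝ F)
    (hlip : ∀ w u : E, ‖gradient F w - gradient F u‖ ≤ L * ‖w - u‖)
    (hFnonneg : ∀ w : E, 0 ≤ F w)
    (hPL : ∀ w : E, 2 * μ * F w ≤ ‖gradient F w‖ ^ 2)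
    (η₀ G δ m₀ : ℝ)
    (hη₀L : η₀ * L ≤ 1) (hη₀μ0 : 0 < η₀ * μ) (hη₀μ1 : η₀ * μ ≤ 1)
    (hG : 0 < G) (hδ : 0 < δ) (hm₀ : 0 < m₀)
    (T : ℕ) (u g : ℕ → E)
    (hupd : ∀ t < T, u (t + 1) = u t - η₀ • g t)
    (hg : ∀ t < T, ‖g t - gradient F (u t)‖ ^ 2 ≤ 4 * G ^ 2 / (δ * m₀)) :
    F (u T) ≤ (1 - η₀ * μ) ^ T * F (u 0) + 2 * G ^ 2 / (δ * m₀ * μ) := by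
  have hη₀ : 0 < η₀ := by nlinarith
  have key : ∀ N : ℕ, (∀ t < N, u (t + 1) = u t - η₀ • g t) →
      (∀ t < N, ‖g t - gradient F (u t)‖ ^ 2 ≤ 4 * G ^ 2 / (δ * m₀)) →
      F (u N) ≤ (1 - η₀ * μ) ^ N * F (u 0) + 2 * G ^ 2 / (δ * m₀ * μ) := by
    intro N
    induction N with
    | zero =>
      intro _ _
      have : (0:ℝ) ≤ 2 * G ^ 2 / (δ * m₀ * μ) := by positivity
      simp only [pow_zero, one_mul]
      linarith
    | succ n ih =>
      intro h1 h2
      have hrec := ih (fun t ht => h1 t (Nat.lt_succ_of_lt ht))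
        (fun t ht => h2 t (Nat.lt_succ_of_lt ht))
      have hstep := one_step F L μ hL hμ hdiff hlip hPL η₀ hη₀ hη₀L (u n) (g n)
      rw [← h1 n (Nat.lt_succ_self n)] at hstep
      have hb := h2 n (Nat.lt_succ_self n)
      have h1n : (0:ℝ) ≤ 1 - η₀ * μ := by linarith
      have hBeq : η₀ / 2 * (4 * G ^ 2 / (δ * m₀))
          = η₀ * μ * (2 * G ^ 2 / (δ * m₀ * μ)) := by
        field_simp
        ring
      have hcomb : F (u (n + 1)) ≤ (1 - η₀ * μ) * F (u n)
          + η₀ * μ * (2 * G ^ 2 / (δ * m₀ * μ)) := by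
        have hmul := mul_le_mul_of_nonneg_left hb (by positivity : (0:ℝ) ≤ η₀ / 2)
        linarith [hstep]
      calc F (u (n + 1))
          ≤ (1 - η₀ * μ) * F (u n) + η₀ * μ * (2 * G ^ 2 / (δ * m₀ * μ)) := hcomb
        _ ≤ (1 - η₀ * μ) * ((1 - η₀ * μ) ^ n * F (u 0) + 2 * G ^ 2 / (δ * m₀ * μ))
            + η₀ * μ * (2 * G ^ 2 / (δ * m₀ * μ)) := by
            nlinarith [mul_le_mul_of_nonneg_left hrec h1n]
        _ = (1 - η₀ * μ) ^ (n + 1) * F (u 0) + 2 * G ^ 2 / (δ * m₀ * μ) := by ring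
  exact key T hupd hg
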